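/- Every convex polytope P ⊂ ℝ^n all of whose dihedral angles (between pairs of adjacent facets) are at most π/2 is, up to isometry, a Cartesian product of simplices. -/

import Mathlib

set_option linter.unusedSectionVars false
set_option maxHeartbeats 1600000

open RealInnerProductSpace Set

section Helpers

variable {E : Type*} [NormedAddCommGroup E] [InnerProductSpace ℝ E] [FiniteDimensional ℝ E]
variable {κ : Type*}

lemma inner_isLinearMap (v : E) : IsLinearMap ℝ (fun x : E => ⟪v, x⟫) :=
  ⟨fun a b => inner_add_right v a b, fun c a => real_inner_smul_right v a c⟩


/-- The cone generated by the vectors `w i`, `i ∈ s`. -/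
def coneIdx (w : κ → E) (s : Finset κ) : Set E :=
  {x | ∃ c : κ → ℝ, (∀ i ∈ s, 0 ≤ c i) ∧ x = ∑ i ∈ s, c i • w i}

lemma coneIdx_mono (w : κ → E) {s t : Finset κ} (hst : s ⊆ t) :
    coneIdx w s ⊆ coneIdx w t := by
  classical
  rintro x ⟨c, hc, rfl⟩
  refine ⟨fun i => if i ∈ s then c i else 0, fun i _ => ?_, ?_⟩
  · dsimp only
    split
    · exact hc _ ‹_›
    · exact le_rfl
  · symm
    calc ∑ i ∈ t, (fun i => if i ∈ s then c i else 0) i • w i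
        = ∑ i ∈ t, (if i ∈ s then c i • w i else 0) :=
          Finset.sum_congr rfl (fun i _ => by dsimp only; split <;> simp)
      _ = ∑ i ∈ s, c i • w i := by rw [Finset.sum_ite_mem, Finset.inter_eq_right.2 hst]

lemma coneIdx_reduce (w : κ → E) (s : Finset κ) {x : E} (hx : x ∈ coneIdx w s) :
    ∃ t ⊆ s, LinearIndependent ℝ (fun i : ↥t => w i) ∧ x ∈ coneIdx w t := by
  classical
  induction s using Finset.strongInduction with
  | _ s ih =>
  by_cases hli : LinearIndependent ℝ (fun i : ↥s => w i)
  · exact ⟨s, Finset.Subset.refl s, hli, hx⟩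
  · obtain ⟨c, hc0, hcs⟩ := hx
    -- get a nontrivial dependence relation
    rw [Fintype.linearIndependent_iff] at hli
    push_neg at hli
    obtain ⟨g, hg0, i₁, hi₁⟩ := hli
    -- extend g to κ
    set d : κ → ℝ := fun i => if h : i ∈ s then g ⟨i, h⟩ else 0 with hd
    have hdsum : ∑ i ∈ s, d i • w i = 0 := by
      rw [← hg0, ← Finset.sum_attach s (fun i => d i • w i)]
      exact Finset.sum_congr rfl (fun i _ => by simp [hd])
    have hdne : ∃ i ∈ s, d i ≠ 0 := ⟨i₁, i₁.2, by simpa [hd] using hi₁⟩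
    -- WLOG there is a positive coefficient
    have main : ∀ (d : κ → ℝ), (∑ i ∈ s, d i • w i = 0) → (∃ i ∈ s, 0 < d i) →
        ∃ t ⊆ s, LinearIndependent ℝ (fun i : ↥t => w i) ∧ x ∈ coneIdx w t := by
      intro d hdsum hdpos
      set sp := s.filter (fun i => 0 < d i) with hsp
      have hspne : sp.Nonempty := by
        obtain ⟨i, his, hip⟩ := hdpos; exact ⟨i, Finset.mem_filter.2 ⟨his, hip⟩⟩
      set ρ : ℝ := sp.inf' hspne (fun i => c i / d i) with hρ
      obtain ⟨i₀, hi₀sp, hi₀⟩ := Finset.exists_mem_eq_inf' hspne (fun i => c i / d i)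
      have hi₀s : i₀ ∈ s := (Finset.mem_filter.1 hi₀sp).1
      have hi₀d : 0 < d i₀ := (Finset.mem_filter.1 hi₀sp).2
      have hρeq : ρ = c i₀ / d i₀ := hρ.trans hi₀
      have hρ0 : 0 ≤ ρ := by rw [hρeq]; exact div_nonneg (hc0 _ hi₀s) hi₀d.le
      set c' : κ → ℝ := fun i => c i - ρ * d i with hc'
      have hc'0 : ∀ i ∈ s, 0 ≤ c' i := by
        intro i his
        rcases le_or_gt (d i) 0 with h | h
        · have : ρ * d i ≤ 0 := mul_nonpos_of_nonneg_of_nonpos hρ0 h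
          simp only [hc']; linarith [hc0 i his]
        · have hile : ρ ≤ c i / d i := Finset.inf'_le _ (Finset.mem_filter.2 ⟨his, h⟩)
          have := (le_div_iff₀ h).1 hile
          simp only [hc']
          linarith
      have hc'sum : x = ∑ i ∈ s, c' i • w i := by
        simp only [hc', sub_smul, mul_smul, Finset.sum_sub_distrib, ← Finset.smul_sum, hdsum,
          smul_zero, sub_zero, hcs]
      have hc'i₀ : c' i₀ = 0 := by
        simp only [hc']
        rw [hρeq]
        field_simp
        ring
      have hxe : x ∈ coneIdx w (s.erase i₀) := by
        refine ⟨c', fun i hi => hc'0 i (Finset.mem_of_mem_erase hi), ?_⟩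
        rw [hc'sum, ← Finset.add_sum_erase _ _ hi₀s, hc'i₀, zero_smul, zero_add]
      obtain ⟨t, hts, hli, hxt⟩ := ih (s.erase i₀) (Finset.erase_ssubset hi₀s) hxe
      exact ⟨t, hts.trans (Finset.erase_subset _ _), hli, hxt⟩
    rcases hdne with ⟨i, his, hine⟩
    rcases hine.lt_or_gt with h | h
    · refine main (fun i => -d i) ?_ ⟨i, his, by simpa using h⟩
      simp only [neg_smul, Finset.sum_neg_distrib, hdsum, neg_zero]
    · exact main d hdsum ⟨i, his, h⟩




lemma isClosed_coneIdx_of_li (w : κ → E) (t : Finset κ)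
    (hli : LinearIndependent ℝ (fun i : ↥t => w i)) : IsClosed (coneIdx w t) := by
  classical
  set φ : (↥t → ℝ) →ₗ[ℝ] E :=
    { toFun := fun c => ∑ i : ↥t, c i • w i
      map_add' := by intro a b; simp [add_smul, Finset.sum_add_distrib]
      map_smul' := by intro m a; simp [smul_smul, Finset.smul_sum]
  } with hφ
  have hinj : LinearMap.ker φ = ⊥ := by
    rw [LinearMap.ker_eq_bot']
    intro c hc
    have := Fintype.linearIndependent_iff.1 hli c hc
    funext i; exact this i
  have hce : Topology.IsClosedEmbedding φ := LinearMap.isClosedEmbedding_of_injective hinj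
  have horth : IsClosed {c : ↥t → ℝ | ∀ i, 0 ≤ c i} := by
    have : {c : ↥t → ℝ | ∀ i, 0 ≤ c i} = ⋂ i, {c | 0 ≤ c i} := by ext c; simp
    rw [this]
    exact isClosed_iInter (fun i => IsClosed.preimage (continuous_apply i) isClosed_Ici)
  have himg : coneIdx w t = φ '' {c : ↥t → ℝ | ∀ i, 0 ≤ c i} := by
    ext x
    constructor
    · rintro ⟨c, hc0, rfl⟩
      refine ⟨fun i => c i, fun i => hc0 i i.2, ?_⟩
      simp only [hφ, LinearMap.coe_mk, AddHom.coe_mk, Finset.univ_eq_attach]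
      rw [← Finset.sum_attach t (fun i => c i • w i)]
    · rintro ⟨c, hc0, rfl⟩
      refine ⟨fun i => if h : i ∈ t then c ⟨i, h⟩ else 0, fun i hi => by simp [hi, hc0 ⟨i, hi⟩], ?_⟩
      simp only [hφ, LinearMap.coe_mk, AddHom.coe_mk, Finset.univ_eq_attach]
      rw [← Finset.sum_attach t (fun i => (if h : i ∈ t then c ⟨i, h⟩ else 0) • w i)]
      exact Finset.sum_congr rfl (fun i _ => by simp [i.2])
  rw [himg]
  exact hce.isClosedMap _ horth

lemma isClosed_coneIdx (w : κ → E) (s : Finset κ) : IsClosed (coneIdx w s) := by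
  classical
  set G : Set (Finset κ) :=
    {t : Finset κ | t ⊆ s ∧ LinearIndependent ℝ (fun i : ↥t => w i)} with hG
  have hGfin : G.Finite := Set.Finite.subset (s.powerset : Finset (Finset κ)).finite_toSet
    (fun t ht => by simpa [Finset.mem_powerset] using ht.1)
  have : coneIdx w s = ⋃ t ∈ G, coneIdx w t := by
    ext x
    simp only [Set.mem_iUnion, hG, Set.mem_setOf_eq]
    constructor
    · intro hx
      obtain ⟨t, hts, hli, hxt⟩ := coneIdx_reduce w s hx
      exact ⟨t, ⟨hts, hli⟩, hxt⟩
    · rintro ⟨t, ⟨hts, _⟩, hxt⟩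
      exact coneIdx_mono w hts hxt
  rw [this]
  exact hGfin.isClosed_biUnion (fun t ht => isClosed_coneIdx_of_li w t ht.2)

lemma coneIdx_zero_mem (w : κ → E) (s : Finset κ) : (0 : E) ∈ coneIdx w s :=
  ⟨fun _ => 0, fun _ _ => le_rfl, by simp⟩

lemma coneIdx_gen_mem (w : κ → E) {s : Finset κ} {i : κ} (hi : i ∈ s) : w i ∈ coneIdx w s := by
  classical
  refine ⟨fun j => if j = i then 1 else 0, fun j _ => by dsimp only; split <;> norm_num, ?_⟩
  rw [Finset.sum_eq_single i (fun j _ hj => by simp [hj]) (fun h => absurd hi h)]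
  simp

/-- Farkas' lemma. -/
lemma farkas (w : κ → E) (s : Finset κ) {e : E} (he : e ∉ coneIdx w s) :
    ∃ d : E, (∀ i ∈ s, ⟪w i, d⟫ ≤ 0) ∧ 0 < ⟪e, d⟫ := by
  classical
  set K : ConvexCone ℝ E :=
    { carrier := coneIdx w s
      smul_mem' := by
        rintro c hc x ⟨γ, hγ0, rfl⟩
        exact ⟨fun i => c * γ i, fun i hi => mul_nonneg hc.le (hγ0 i hi),
          by rw [Finset.smul_sum]; exact Finset.sum_congr rfl (fun i _ => by dsimp only; rw [smul_smul])⟩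
      add_mem' := by
        rintro x ⟨γ, hγ0, rfl⟩ y ⟨δ, hδ0, rfl⟩
        exact ⟨fun i => γ i + δ i, fun i hi => add_nonneg (hγ0 i hi) (hδ0 i hi),
          by rw [← Finset.sum_add_distrib]; exact Finset.sum_congr rfl (fun i _ => by dsimp only; rw [add_smul])⟩
  } with hK
  have hne : (K : Set E).Nonempty := ⟨0, coneIdx_zero_mem w s⟩
  have hcl : IsClosed (K : Set E) := isClosed_coneIdx w s
  obtain ⟨y, hy1, hy2⟩ : ∃ y : E, (∀ x ∈ coneIdx w s, 0 ≤ ⟪x, y⟫) ∧ ⟪y, e⟫ < 0 := by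
    let PC : ProperCone ℝ E :=
      { carrier := coneIdx w s
        add_mem' := fun hx hy => K.add_mem hx hy
        zero_mem' := coneIdx_zero_mem w s
        smul_mem' := by
          rintro c x ⟨γ, hγ0, rfl⟩
          exact ⟨fun i => (c : ℝ) * γ i, fun i hi => mul_nonneg c.2 (hγ0 i hi), by
            rw [Finset.smul_sum]; exact Finset.sum_congr rfl (fun i _ => by rw [← smul_smul]; rfl)⟩
        isClosed' := hcl }
    obtain ⟨y, hy1, hy2⟩ := PC.hyperplane_separation' (x₀ := e) he
    exact ⟨y, hy1, by rw [real_inner_comm]; exact hy2⟩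
  refine ⟨-y, fun i hi => ?_, ?_⟩
  · have := hy1 (w i) (coneIdx_gen_mem w hi)
    rw [inner_neg_right]; linarith
  · rw [inner_neg_right, real_inner_comm]
    linarith



/-- Sliding from a point of a polyhedron along a direction that does not increase
any of the tight constraints. -/
lemma slide (w : κ → E) (bb : κ → ℝ) (s : Finset κ) (x d : E)
    (hx : ∀ i ∈ s, ⟪w i, x⟫ ≤ bb i) (hd : ∀ i ∈ s, ⟪w i, x⟫ = bb i → ⟪w i, d⟫ ≤ 0) :
    ∃ ε : ℝ, 0 < ε ∧ ∀ i ∈ s, ⟪w i, x + ε • d⟫ ≤ bb i := by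
  classical
  set sp := s.filter (fun i => 0 < ⟪w i, d⟫) with hsp
  have hslack : ∀ i ∈ sp, 0 < (bb i - ⟪w i, x⟫) / ⟪w i, d⟫ := by
    intro i hi
    obtain ⟨his, hid⟩ := Finset.mem_filter.1 hi
    have : ⟪w i, x⟫ < bb i := by
      rcases lt_or_eq_of_le (hx i his) with h | h
      · exact h
      · exact absurd hid (not_lt.2 (hd i his h))
    exact div_pos (by linarith) hid
  by_cases hne : sp.Nonempty
  · set ε := sp.inf' hne (fun i => (bb i - ⟪w i, x⟫) / ⟪w i, d⟫) with hε
    have hε0 : 0 < ε := by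
      rw [hε, Finset.lt_inf'_iff]
      exact hslack
    refine ⟨ε, hε0, fun i his => ?_⟩
    rw [inner_add_right, real_inner_smul_right]
    by_cases hid : 0 < ⟪w i, d⟫
    · have hle : ε ≤ (bb i - ⟪w i, x⟫) / ⟪w i, d⟫ :=
        Finset.inf'_le _ (Finset.mem_filter.2 ⟨his, hid⟩)
      have := (le_div_iff₀ hid).1 hle
      linarith
    · have : ε * ⟪w i, d⟫ ≤ 0 :=
        mul_nonpos_of_nonneg_of_nonpos hε0.le (not_lt.1 hid)
      linarith [hx i his]
  · refine ⟨1, one_pos, fun i his => ?_⟩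
    have hid : ⟪w i, d⟫ ≤ 0 := by
      by_contra h
      exact hne ⟨i, Finset.mem_filter.2 ⟨his, not_le.1 h⟩⟩
    rw [inner_add_right, real_inner_smul_right]
    linarith [hx i his]

/-- First-order optimality condition for minimizing distance to `y` over a convex set. -/
lemma min_dist_inner {K : Set E} (hK : Convex ℝ K) {x y : E} (hx : x ∈ K)
    (hmin : ∀ z ∈ K, ‖x - y‖ ≤ ‖z - y‖) : ∀ z ∈ K, 0 ≤ ⟪x - y, z - x⟫ := by
  intro z hz
  by_contra hc
  push_neg at hc
  set c := ⟪x - y, z - x⟫ with hcdef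
  have hzx : z - x ≠ 0 := by
    intro h
    rw [hcdef, h, inner_zero_right] at hc
    exact lt_irrefl 0 hc
  have hn : 0 < ‖z - x‖ ^ 2 := by
    have := norm_pos_iff.2 hzx
    positivity
  set t := min 1 (-c / ‖z - x‖ ^ 2) with ht
  have ht0 : 0 < t := lt_min one_pos (div_pos (by linarith) hn)
  have ht1 : t ≤ 1 := min_le_left _ _
  have hzt : x + t • (z - x) ∈ K := by
    have := hK hx hz (by linarith : (0:ℝ) ≤ 1 - t) ht0.le (by ring)
    convert this using 1
    module
  have hexp : ‖(x + t • (z - x)) - y‖ ^ 2 = ‖x - y‖ ^ 2 + 2 * t * c + t ^ 2 * ‖z - x‖ ^ 2 := by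
    have : (x + t • (z - x)) - y = (x - y) + t • (z - x) := by abel
    rw [this, norm_add_sq_real, real_inner_smul_right, norm_smul]
    simp only [Real.norm_eq_abs, abs_of_pos ht0]
    rw [hcdef]
    ring
  have hmin' := hmin _ hzt
  have hsq : ‖x - y‖ ^ 2 ≤ ‖(x + t • (z - x)) - y‖ ^ 2 := by
    apply sq_le_sq' <;> [linarith [norm_nonneg ((x + t • (z - x)) - y), norm_nonneg (x - y)]; exact hmin']
  rw [hexp] at hsq
  have h2 : 0 ≤ 2 * c + t * ‖z - x‖ ^ 2 := by nlinarith
  have h3 : t * ‖z - x‖ ^ 2 ≤ -c := by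
    have hle : t ≤ -c / ‖z - x‖ ^ 2 := min_le_right _ _
    exact (le_div_iff₀ hn).1 hle
  linarith





lemma opposite_normal [Fintype κ] (w : κ → E) (bb : κ → ℝ)
    (hw : ∀ i, ‖w i‖ = 1) (P : Set E) (hP : P = ⋂ i, {x | ⟪w i, x⟫ ≤ bb i})
    (hPc : IsCompact P)
    (hacute : ∀ i j, i ≠ j → (P ∩ {x | ⟪w i, x⟫ = bb i} ∩ {x | ⟪w j, x⟫ = bb j}).Nonempty →
      ⟪w i, w j⟫ ≤ 0)
    {i j : κ} (hij : i ≠ j)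
    (hFi : (P ∩ {x | ⟪w i, x⟫ = bb i}).Nonempty)
    (hFj : (P ∩ {x | ⟪w j, x⟫ = bb j}).Nonempty) :
    ⟪w i, w j⟫ ≤ 0 := by
  classical
  by_cases hadj : (P ∩ {x | ⟪w i, x⟫ = bb i} ∩ {x | ⟪w j, x⟫ = bb j}).Nonempty
  · exact hacute i j hij hadj
  -- basic properties
  have hPmem : ∀ {z : E}, z ∈ P → ∀ k, ⟪w k, z⟫ ≤ bb k := by
    intro z hz k
    rw [hP] at hz
    exact mem_iInter.1 hz k
  have hmemP : ∀ {z : E}, (∀ k, ⟪w k, z⟫ ≤ bb k) → z ∈ P := by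
    intro z hz
    rw [hP]
    exact mem_iInter.2 hz
  have hPconv : Convex ℝ P := by
    rw [hP]
    exact convex_iInter fun k => convex_halfSpace_le (inner_isLinearMap (w k)) (bb k)
  have hhyp : ∀ k : κ, IsClosed {x : E | ⟪w k, x⟫ = bb k} :=
    fun k => isClosed_eq (continuous_const.inner continuous_id') continuous_const
  have hhypconv : ∀ k : κ, Convex ℝ {x : E | ⟪w k, x⟫ = bb k} :=
    fun k => convex_hyperplane (inner_isLinearMap (w k)) (bb k)
  set F := P ∩ {x | ⟪w i, x⟫ = bb i} with hF
  set G := P ∩ {x | ⟪w j, x⟫ = bb j} with hG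
  have hFc : IsCompact F := hPc.inter_right (hhyp i)
  have hGc : IsCompact G := hPc.inter_right (hhyp j)
  have hFconv : Convex ℝ F := hPconv.inter (hhypconv i)
  have hGconv : Convex ℝ G := hPconv.inter (hhypconv j)
  -- distance minimizers
  obtain ⟨⟨x, y⟩, hxymem, hxymin⟩ := (hFc.prod hGc).exists_isMinOn (hFi.prod hFj)
    (((continuous_fst.sub continuous_snd).norm).continuousOn :
      ContinuousOn (fun p : E × E => ‖p.1 - p.2‖) (F ×ˢ G))
  obtain ⟨hxF, hyG⟩ := mem_prod.1 hxymem
  have hmin : ∀ z₁ ∈ F, ∀ z₂ ∈ G, ‖x - y‖ ≤ ‖z₁ - z₂‖ := by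
    intro z₁ h₁ z₂ h₂
    exact hxymin (show (z₁, z₂) ∈ F ×ˢ G from Set.mem_prod.2 ⟨h₁, h₂⟩)
  have hxyne : x ≠ y := by
    rintro rfl
    exact hadj ⟨x, ⟨hxF.1, hxF.2⟩, hyG.2⟩
  set D := ‖x - y‖ with hD
  have hD0 : 0 < D := norm_pos_iff.2 (sub_ne_zero.2 hxyne)
  set e := D⁻¹ • (y - x) with he
  have hDe : D • e = y - x := by
    rw [he, smul_smul, mul_inv_cancel₀ hD0.ne', one_smul]
  have hene : ‖e‖ = 1 := by
    rw [he, norm_smul, norm_sub_rev, Real.norm_eq_abs, abs_of_pos (inv_pos.2 hD0),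
      inv_mul_cancel₀ hD0.ne']
  have h1 : ∀ k, ⟪w k, x⟫ = bb k → ⟪w k, e⟫ ≤ 0 := by
    intro k hk
    have hy' : ⟪w k, y⟫ ≤ bb k := hPmem hyG.1 k
    rw [he, real_inner_smul_right, inner_sub_right]
    have : ⟪w k, y⟫ - ⟪w k, x⟫ ≤ 0 := by rw [hk]; linarith
    exact mul_nonpos_of_nonneg_of_nonpos (inv_pos.2 hD0).le this
  have h2 : ∀ k, ⟪w k, y⟫ = bb k → 0 ≤ ⟪w k, e⟫ := by
    intro k hk
    have hx' : ⟪w k, x⟫ ≤ bb k := hPmem hxF.1 k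
    rw [he, real_inner_smul_right, inner_sub_right]
    have : 0 ≤ ⟪w k, y⟫ - ⟪w k, x⟫ := by rw [hk]; linarith
    exact mul_nonneg (inv_pos.2 hD0).le this
  -- the key normal-cone argument
  have key : ∀ (i₀ : κ) (x₀ e₀ : E), x₀ ∈ P → ⟪w i₀, x₀⟫ = bb i₀ → ‖e₀‖ = 1 →
      (∀ k, ⟪w k, x₀⟫ = bb k → ⟪w k, e₀⟫ ≤ 0) →
      (∀ z, z ∈ P → ⟪w i₀, z⟫ = bb i₀ → ⟪e₀, z - x₀⟫ ≤ 0) → e₀ = -w i₀ := by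
    intro i₀ x₀ e₀ hx₀P hti₀ hne₀ hsign hopt
    set A : Finset E := ((Finset.univ.filter (fun k => ⟪w k, x₀⟫ = bb k)).image w) ∪ {-w i₀}
      with hA
    have hmemA : e₀ ∈ coneIdx (id : E → E) A := by
      by_contra hc
      obtain ⟨d, hd1, hd2⟩ := farkas id A hc
      simp only [id] at hd1 hd2
      have hdk : ∀ k, ⟪w k, x₀⟫ = bb k → ⟪w k, d⟫ ≤ 0 := by
        intro k hk
        exact hd1 (w k) (Finset.mem_union_left _
          (Finset.mem_image_of_mem w (Finset.mem_filter.2 ⟨Finset.mem_univ k, hk⟩)))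
      have hdi' : ⟪w i₀, d⟫ = 0 := by
        have hneg := hd1 (-w i₀) (Finset.mem_union_right _ (Finset.mem_singleton_self _))
        rw [inner_neg_left] at hneg
        have := hdk i₀ hti₀
        linarith
      obtain ⟨ε, hε0, hε⟩ := slide w bb Finset.univ x₀ d
        (fun k _ => hPmem hx₀P k) (fun k _ hk => hdk k hk)
      have hzP : x₀ + ε • d ∈ P := hmemP (fun k => hε k (Finset.mem_univ k))
      have hzt : ⟪w i₀, x₀ + ε • d⟫ = bb i₀ := by
        rw [inner_add_right, real_inner_smul_right, hdi', hti₀]; ring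
      have := hopt _ hzP hzt
      rw [add_sub_cancel_left, real_inner_smul_right] at this
      nlinarith
    obtain ⟨c, hc0, hce⟩ := hmemA
    simp only [id] at hce
    set q := ⟪e₀, w i₀⟫ with hq
    have hq0 : q ≤ 0 := by
      rw [hq, real_inner_comm]
      exact hsign i₀ hti₀
    set v := e₀ - q • w i₀ with hv
    have hwi1 : ⟪w i₀, w i₀⟫ = 1 := by
      rw [real_inner_self_eq_norm_sq, hw i₀]; norm_num
    have hvw : ⟪v, w i₀⟫ = 0 := by
      rw [hv, inner_sub_left, real_inner_smul_left, hwi1, ← hq]; ring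
    have hva : ∀ a ∈ A, ⟪v, a⟫ ≤ 0 := by
      intro a ha
      rw [hA, Finset.mem_union] at ha
      rcases ha with ha | ha
      · obtain ⟨k, hk, rfl⟩ := Finset.mem_image.1 ha
        have htk : ⟪w k, x₀⟫ = bb k := (Finset.mem_filter.1 hk).2
        by_cases hki : k = i₀
        · rw [hki, hvw]
        · have hek : ⟪e₀, w k⟫ ≤ 0 := by rw [real_inner_comm]; exact hsign k htk
          have hik : ⟪w i₀, w k⟫ ≤ 0 :=
            hacute i₀ k (fun h => hki h.symm) ⟨x₀, ⟨hx₀P, hti₀⟩, htk⟩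
          rw [hv, inner_sub_left, real_inner_smul_left]
          nlinarith
      · rw [Finset.mem_singleton.1 ha, inner_neg_right, hvw, neg_zero]
    have hve : ⟪v, e₀⟫ ≤ 0 := by
      rw [hce, inner_sum]
      refine Finset.sum_nonpos (fun a ha => ?_)
      rw [real_inner_smul_right]
      exact mul_nonpos_of_nonneg_of_nonpos (hc0 a ha) (hva a ha)
    have hv0 : v = 0 := by
      have : ⟪v, v⟫ = ⟪v, e₀⟫ := by
        rw [hv, inner_sub_right, real_inner_smul_right, hvw]; ring
      have h0 : ⟪v, v⟫ ≤ 0 := this ▸ hve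
      exact inner_self_eq_zero.1 (le_antisymm h0 real_inner_self_nonneg)
    have he₀ : e₀ = q • w i₀ := sub_eq_zero.1 hv0
    have habs : |q| = 1 := by
      have := hne₀
      rw [he₀, norm_smul, hw i₀, mul_one, Real.norm_eq_abs] at this
      exact this
    have hqm1 : q = -1 := by
      rcases abs_eq (by norm_num : (0:ℝ) ≤ 1) |>.1 habs with h | h
      · linarith
      · exact h
    rw [he₀, hqm1, neg_one_smul]
  -- apply at x
  have hex : e = -w i := by
    refine key i x e hxF.1 hxF.2 hene h1 ?_
    intro z hz hzt
    have hzF : z ∈ F := ⟨hz, hzt⟩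
    have h0 := min_dist_inner hFconv hxF (fun z₁ h₁ => hmin z₁ h₁ y hyG) z hzF
    have hxy : x - y = -(D • e) := by rw [hDe]; abel
    rw [hxy, inner_neg_left, real_inner_smul_left] at h0
    have : 0 ≤ -(D * ⟪e, z - x⟫) := h0
    nlinarith
  -- apply at y
  have hey : -e = -w j := by
    refine key j y (-e) hyG.1 hyG.2 (by rw [norm_neg]; exact hene) ?_ ?_
    · intro k hk
      rw [inner_neg_right]
      linarith [h2 k hk]
    · intro z hz hzt
      have hzG : z ∈ G := ⟨hz, hzt⟩
      have hmin' : ∀ z₂ ∈ G, ‖y - x‖ ≤ ‖z₂ - x‖ := by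
        intro z₂ h₂
        rw [norm_sub_rev, norm_sub_rev z₂ x]
        exact hmin x hxF z₂ h₂
      have h0 := min_dist_inner hGconv hyG hmin' z hzG
      have hyx : y - x = D • e := hDe.symm ▸ rfl
      rw [hyx, real_inner_smul_left] at h0
      rw [inner_neg_left]
      nlinarith
  have hwj : w j = -w i := by
    have : e = w j := by rw [← neg_neg e, hey, neg_neg]
    rw [← this, hex]
  rw [hwj, inner_neg_right, real_inner_self_eq_norm_sq, hw i]
  norm_num




/-- Constraints that are nowhere tight on a (closed, bounded) nonempty `P` are redundant. -/
lemma reduce_tight [Fintype κ] (w : κ → E) (bb : κ → ℝ) (P : Set E)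
    (hP : P = ⋂ i, {x | ⟪w i, x⟫ ≤ bb i}) (hPne : P.Nonempty) :
    P = ⋂ i : {i : κ // ∃ x ∈ P, ⟪w i, x⟫ = bb i}, {x | ⟪w i.1, x⟫ ≤ bb i.1} := by
  classical
  have hPconv : Convex ℝ P := by
    rw [hP]; exact convex_iInter fun k => convex_halfSpace_le (inner_isLinearMap (w k)) (bb k)
  have hPcl : IsClosed P := by
    rw [hP]
    exact isClosed_iInter fun k =>
      isClosed_le (continuous_const.inner continuous_id') continuous_const
  apply Set.Subset.antisymm
  · intro z hz
    exact mem_iInter.2 fun i => by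
      rw [hP] at hz
      exact mem_iInter.1 hz i.1
  · intro z hz
    obtain ⟨x₀, hx₀⟩ := hPne
    by_contra hzP
    set f : ℝ → E := fun t => x₀ + t • (z - x₀) with hf
    have hf0 : f 0 = x₀ := by simp [hf]
    have hf1 : f 1 = z := by simp [hf]
    have hfc : Continuous f := by
      apply continuous_const.add (continuous_id.smul continuous_const)
    set S : Set ℝ := Icc (0:ℝ) 1 ∩ f ⁻¹' P with hS
    have hScpt : IsCompact S := isCompact_Icc.inter_right (hPcl.preimage hfc)
    have hSne : S.Nonempty := ⟨0, ⟨le_rfl, zero_le_one⟩, by rw [mem_preimage, hf0]; exact hx₀⟩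
    obtain ⟨t', ht'S, ht'max⟩ := hScpt.exists_isGreatest hSne
    have ht'P : f t' ∈ P := ht'S.2
    have ht'I : t' ∈ Icc (0:ℝ) 1 := ht'S.1
    have ht'1 : t' < 1 := by
      rcases lt_or_eq_of_le ht'I.2 with h | h
      · exact h
      · exfalso; apply hzP; rw [← hf1, ← h]; exact ht'P
    -- slide from f t' towards z
    have hd : ∀ k, ⟪w k, f t'⟫ = bb k → ⟪w k, z - x₀⟫ ≤ 0 := by
      intro k hk
      have hkI : ∃ x ∈ P, ⟪w k, x⟫ = bb k := ⟨f t', ht'P, hk⟩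
      have hz' : ⟪w k, z⟫ ≤ bb k := mem_iInter.1 hz ⟨k, hkI⟩
      have hx₀' : ⟪w k, f t'⟫ = ⟪w k, x₀⟫ + t' * ⟪w k, z - x₀⟫ := by
        rw [hf]; simp [inner_add_right, real_inner_smul_right]
    -- ⟪w k, z⟫ = ⟪w k, x₀⟫ + ⟪w k, z - x₀⟫
      have hzeq : ⟪w k, z⟫ = ⟪w k, x₀⟫ + ⟪w k, z - x₀⟫ := by
        rw [inner_sub_right]; ring
      nlinarith [hz', hk, hx₀', hzeq, ht'1]
    obtain ⟨ε, hε0, hε⟩ := slide w bb Finset.univ (f t') (z - x₀)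
      (fun k _ => by rw [hP] at ht'P; exact mem_iInter.1 ht'P k) (fun k _ hk => hd k hk)
    set ε' : ℝ := min ε (1 - t') with hε'
    have hε'0 : 0 < ε' := lt_min hε0 (by linarith)
    have hεP : f t' + ε • (z - x₀) ∈ P := by
      rw [hP]; exact mem_iInter.2 fun k => hε k (Finset.mem_univ k)
    have hstep : f (t' + ε') ∈ P := by
      have hcombo := hPconv ht'P hεP
        (by rw [sub_nonneg]; exact (div_le_one hε0).2 (min_le_left _ _) : (0:ℝ) ≤ 1 - ε'/ε)
        (by positivity : (0:ℝ) ≤ ε'/ε)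
        (by ring)
      have hee : (ε'/ε) * ε = ε' := div_mul_cancel₀ _ hε0.ne'
      have heq : (1 - ε'/ε) • f t' + (ε'/ε) • (f t' + ε • (z - x₀))
          = f t' + ((ε'/ε) * ε) • (z - x₀) := by module
      rw [heq, hee] at hcombo
      have : f (t' + ε') = f t' + ε' • (z - x₀) := by
        rw [hf]; dsimp only; rw [add_smul]; abel
      rwa [this]
    have hmem : t' + ε' ∈ S := ⟨⟨by linarith [ht'I.1], by
        have : ε' ≤ 1 - t' := min_le_right _ _
        linarith⟩, hstep⟩
    have := ht'max hmem
    linarith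



/-- A bounded nonempty intersection of half-spaces admits no direction making all
inner products nonpositive. -/
lemma bounded_ray (w : κ → E) (bb : κ → ℝ) (P : Set E)
    (hP : P = ⋂ i, {x | ⟪w i, x⟫ ≤ bb i}) (hPb : Bornology.IsBounded P)
    (hPne : P.Nonempty) {d : E} (hd : ∀ i, ⟪w i, d⟫ ≤ 0) : d = 0 := by
  by_contra hd0
  obtain ⟨x₀, hx₀⟩ := hPne
  obtain ⟨R, hR⟩ := isBounded_iff_forall_norm_le.1 hPb
  have hdn : 0 < ‖d‖ := norm_pos_iff.2 hd0
  set t : ℝ := (R + ‖x₀‖ + 1) / ‖d‖ with ht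
  have ht0 : 0 ≤ t := by
    have hR0 : 0 ≤ R := le_trans (norm_nonneg x₀) (hR x₀ hx₀)
    positivity
  have hmem : x₀ + t • d ∈ P := by
    rw [hP]
    refine mem_iInter.2 fun i => ?_
    have hx₀i : ⟪w i, x₀⟫ ≤ bb i := by
      rw [hP] at hx₀
      exact mem_iInter.1 hx₀ i
    have : t * ⟪w i, d⟫ ≤ 0 := mul_nonpos_of_nonneg_of_nonpos ht0 (hd i)
    simp only [mem_setOf_eq, inner_add_right, real_inner_smul_right]
    linarith
  have hnorm := hR _ hmem
  have h1 : ‖t • d‖ ≤ ‖x₀ + t • d‖ + ‖x₀‖ := by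
    have := norm_sub_le (x₀ + t • d) x₀
    simpa using this
  rw [norm_smul, Real.norm_eq_abs, abs_of_nonneg ht0, ht] at h1
  rw [div_mul_cancel₀ _ hdn.ne'] at h1
  linarith

/-- Unit-free positive dependence: if no nonzero vector has nonpositive inner product
with every `w i`, then the `w i` admit a strictly positive linear dependence. -/
lemma pos_dep [Fintype κ] [Nonempty κ] (w : κ → E)
    (hray : ∀ d : E, (∀ i, ⟪w i, d⟫ ≤ 0) → d = 0) :
    ∃ lam : κ → ℝ, (∀ i, 0 < lam i) ∧ ∑ i, lam i • w i = 0 := by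
  classical
  set K : Set E := {x | ∃ μ : κ → ℝ, (∀ i, 0 ≤ μ i) ∧ ∑ i, μ i = 1 ∧ x = ∑ i, μ i • w i}
    with hK
  have hKconv : Convex ℝ K := by
    rintro x ⟨μ, hμ0, hμ1, rfl⟩ y ⟨ν, hν0, hν1, rfl⟩ a b ha hb hab
    refine ⟨fun i => a * μ i + b * ν i,
      fun i => add_nonneg (mul_nonneg ha (hμ0 i)) (mul_nonneg hb (hν0 i)), ?_, ?_⟩
    · rw [Finset.sum_add_distrib, ← Finset.mul_sum, ← Finset.mul_sum, hμ1, hν1]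
      simpa using hab
    · rw [Finset.smul_sum, Finset.smul_sum, ← Finset.sum_add_distrib]
      exact Finset.sum_congr rfl fun i _ => by
        dsimp only; rw [add_smul, smul_smul, smul_smul]
  have hKw : ∀ i, w i ∈ K := by
    intro i
    refine ⟨fun j => if j = i then 1 else 0, fun j => by dsimp only; split <;> norm_num,
      by simp, ?_⟩
    rw [Finset.sum_eq_single i (fun j _ hj => by simp [hj]) (fun h => absurd (Finset.mem_univ i) h)]
    simp
  have hKne : K.Nonempty := ⟨w (Classical.arbitrary κ), hKw _⟩
  -- interior of K is nonempty
  have hKint : (interior K).Nonempty := by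
    by_contra hempty
    rw [Set.not_nonempty_iff_eq_empty] at hempty
    have hsp : affineSpan ℝ K ≠ ⊤ := by
      intro h
      have := (hKconv.interior_nonempty_iff_affineSpan_eq_top).2 h
      rw [hempty] at this
      exact Set.not_nonempty_empty this
    have hdir : (affineSpan ℝ K).direction ≠ ⊤ := by
      intro h
      exact hsp ((AffineSubspace.direction_eq_top_iff_of_nonempty
        (hKne.mono (subset_affineSpan ℝ K))).1 h)
    have horth : (affineSpan ℝ K).directionᗮ ≠ ⊥ := by
      intro h
      exact hdir (Submodule.orthogonal_eq_bot_iff.1 h)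
    obtain ⟨a, haW, ha0⟩ := Submodule.exists_mem_ne_zero_of_ne_bot horth
    set i₁ := Classical.arbitrary κ
    have hc : ∀ i : κ, ⟪w i, a⟫ = ⟪w i₁, a⟫ := by
      intro i
      have hmem : w i - w i₁ ∈ (affineSpan ℝ K).direction := by
        have h1 : w i ∈ affineSpan ℝ K := subset_affineSpan ℝ K (hKw i)
        have h2 : w i₁ ∈ affineSpan ℝ K := subset_affineSpan ℝ K (hKw i₁)
        simpa using AffineSubspace.vsub_mem_direction h1 h2
      have := (Submodule.mem_orthogonal _ a).1 haW _ hmem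
      rw [inner_sub_left] at this
      linarith
    by_cases hcs : ⟪w i₁, a⟫ ≤ 0
    · have : a = 0 := hray a fun i => by rw [hc i]; exact hcs
      exact ha0 this
    · have : -a = 0 := hray (-a) fun i => by
        rw [inner_neg_right, hc i]; linarith
      exact ha0 (by simpa using this)
  -- 0 belongs to the interior of K
  have h0K : (0 : E) ∈ interior K := by
    by_contra h0
    obtain ⟨f, hf⟩ := geometric_hahn_banach_open_point hKconv.interior isOpen_interior h0
    have hf0 : f 0 = 0 := map_zero f
    obtain ⟨aint, haint⟩ := hKint
    -- f is negative on interior K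
    have hneg : ∀ x ∈ K, f x ≤ 0 := by
      intro x hx
      by_contra hpos
      push_neg at hpos
      -- combo of interior point and x stays in interior
      have hseg : ∀ t : ℝ, 0 < t → t ≤ 1 → (1 - t) • x + t • aint ∈ interior K := by
        intro t ht0 ht1
        exact hKconv.combo_closure_interior_mem_interior (subset_closure hx) haint
          (by linarith) ht0 (by ring)
      set M := |f aint| + |f x| + 1 with hM
      have hM0 : 0 < M := by positivity
      set t : ℝ := min 1 (f x / M) with htd
      have ht0 : 0 < t := lt_min one_pos (div_pos hpos hM0)
      have ht1 : t ≤ 1 := min_le_left _ _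
      have := hf _ (hseg t ht0 ht1)
      rw [hf0, map_add, map_smul, map_smul] at this
      have htM : t * M ≤ f x := by
        have : t ≤ f x / M := min_le_right _ _
        exact (le_div_iff₀ hM0).1 this
      have habs1 : f aint ≥ -|f aint| := neg_abs_le _
      have habs2 : f x ≤ |f x| := le_abs_self _
      simp only [smul_eq_mul] at this
      nlinarith
    set d := (InnerProductSpace.toDual ℝ E).symm f with hd
    have hdi : ∀ x : E, ⟪d, x⟫ = f x := fun x => InnerProductSpace.toDual_symm_apply
    have hdz : d = 0 := hray d fun i => by rw [real_inner_comm, hdi (w i)]; exact hneg _ (hKw i)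
    have hf0' : ∀ x, f x = 0 := by
      intro x
      rw [← hdi x, hdz, inner_zero_left]
    have := hf aint haint
    rw [hf0, hf0' aint] at this
    exact lt_irrefl 0 this
  -- extract a small negative multiple of the sum
  obtain ⟨ε, hε0, hball⟩ := Metric.mem_nhds_iff.1 (mem_interior_iff_mem_nhds.1 h0K)
  set σ : E := ∑ i, w i with hσ
  set δ : ℝ := ε / (2 * (‖σ‖ + 1)) with hδ
  have hδ0 : 0 < δ := by positivity
  have hptK : -δ • σ ∈ K := by
    apply hball
    rw [Metric.mem_ball, dist_zero_right, norm_smul, Real.norm_eq_abs, abs_neg,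
      abs_of_pos hδ0, hδ]
    have h1 : ‖σ‖ < 2 * (‖σ‖ + 1) := by linarith [norm_nonneg σ]
    calc ε / (2 * (‖σ‖ + 1)) * ‖σ‖ < ε / (2 * (‖σ‖ + 1)) * (2 * (‖σ‖ + 1)) := by
          apply mul_lt_mul_of_pos_left h1 (by positivity)
      _ = ε := by field_simp
  obtain ⟨μ, hμ0, hμ1, hμe⟩ := hptK
  refine ⟨fun i => μ i + δ, fun i => by dsimp only; linarith [hμ0 i], ?_⟩
  have : ∑ i, (μ i + δ) • w i = ∑ i, μ i • w i + δ • σ := by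
    rw [hσ, Finset.smul_sum, ← Finset.sum_add_distrib]
    exact Finset.sum_congr rfl fun i _ => by rw [add_smul]
  rw [this, ← hμe]
  simp


section Components
variable {ι : Type*} [Fintype ι] [DecidableEq ι]


lemma no_proper_dep (g : ι → E) (C : Finset ι)
    (hpair : ∀ i ∈ C, ∀ j ∈ C, i ≠ j → ⟪g i, g j⟫ ≤ 0)
    (hconn : ∀ S : Finset ι, S ⊆ C → S.Nonempty → S ≠ C →
      ∃ a ∈ S, ∃ b ∈ C, b ∉ S ∧ ⟪g a, g b⟫ ≠ 0)
    (c : ι → ℝ) (S : Finset ι) (hSC : S ⊆ C) (hSne : S.Nonempty) (hSneC : S ≠ C)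
    (hcpos : ∀ i ∈ S, 0 < c i) (hksum : ∑ i ∈ S, c i • g i = 0) : False := by
  obtain ⟨a, haS, b, hbC, hbS, hab⟩ := hconn S hSC hSne hSneC
  have h0 : ∑ i ∈ S, c i * ⟪g i, g b⟫ = 0 := by
    have := congrArg (fun x => ⟪x, g b⟫) hksum
    simpa [sum_inner, real_inner_smul_left] using this
  have hterm : ∀ i ∈ S, c i * ⟪g i, g b⟫ ≤ 0 := by
    intro i hiS
    have hne : i ≠ b := fun h => hbS (h ▸ hiS)
    exact mul_nonpos_of_nonneg_of_nonpos (hcpos i hiS).le (hpair i (hSC hiS) b hbC hne)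
  have := (Finset.sum_eq_zero_iff_of_nonpos hterm).1 h0 a haS
  rcases mul_eq_zero.1 this with h | h
  · exact (hcpos a haS).ne' h
  · exact hab h

lemma component_indep (g : ι → E) (C : Finset ι)
    (hpair : ∀ i ∈ C, ∀ j ∈ C, i ≠ j → ⟪g i, g j⟫ ≤ 0)
    (hconn : ∀ S : Finset ι, S ⊆ C → S.Nonempty → S ≠ C →
      ∃ a ∈ S, ∃ b ∈ C, b ∉ S ∧ ⟪g a, g b⟫ ≠ 0)
    {s : ι} (hs : s ∈ C) :
    LinearIndependent ℝ (fun i : ↥(C.erase s) => g i) := by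
  classical
  rw [Fintype.linearIndependent_iff]
  intro coef hsum
  by_contra hne
  push_neg at hne
  obtain ⟨i₀, hi₀⟩ := hne
  set c : ι → ℝ := fun i => if h : i ∈ C.erase s then coef ⟨i, h⟩ else 0 with hc
  have hcsum : ∑ i ∈ C.erase s, c i • g i = 0 := by
    rw [← Finset.sum_attach (C.erase s) (fun i => c i • g i), ← hsum, Finset.univ_eq_attach]
    refine Finset.sum_congr rfl fun i _ => ?_
    have : c i.1 = coef i := by simp only [hc]; rw [dif_pos i.2]
    rw [this]
  have hci₀ : c i₀.1 ≠ 0 := by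
    have : c i₀.1 = coef i₀ := by simp only [hc]; rw [dif_pos i₀.2]
    rw [this]; exact hi₀
  set Sp := (C.erase s).filter (fun i => 0 < c i) with hSp
  set Sm := (C.erase s).filter (fun i => c i < 0) with hSm
  have hSpC : Sp ⊆ C := (Finset.filter_subset _ _).trans (Finset.erase_subset _ _)
  have hSmC : Sm ⊆ C := (Finset.filter_subset _ _).trans (Finset.erase_subset _ _)
  have hsSp : s ∉ Sp := fun h => Finset.notMem_erase s C (Finset.filter_subset _ _ h)
  have hsSm : s ∉ Sm := fun h => Finset.notMem_erase s C (Finset.filter_subset _ _ h)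
  have hSpne : Sp ≠ C := fun h => hsSp (h ▸ hs)
  have hSmne : Sm ≠ C := fun h => hsSm (h ▸ hs)
  have hsplit : ∑ i ∈ Sp, c i • g i + ∑ i ∈ Sm, c i • g i = 0 := by
    rw [← hcsum,
      ← Finset.sum_filter_add_sum_filter_not (C.erase s) (fun i => 0 < c i) (fun i => c i • g i)]
    congr 1
    apply Finset.sum_subset
    · intro i hi
      rw [Finset.mem_filter] at hi ⊢
      exact ⟨hi.1, not_lt.2 hi.2.le⟩
    · intro i hi hni
      rw [Finset.mem_filter] at hi hni
      have h2 : ¬ c i < 0 := fun h => hni ⟨hi.1, h⟩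
      rw [le_antisymm (not_lt.1 hi.2) (not_lt.1 h2), zero_smul]
  have hdisj : ∀ i ∈ Sp, ∀ j ∈ Sm, i ≠ j := by
    intro i hi j hj h
    rw [Finset.mem_filter] at hi hj
    rw [h] at hi
    linarith [hi.2, hj.2]
  have heq : ∑ i ∈ Sp, c i • g i = ∑ j ∈ Sm, (-c j) • g j := by
    have h := eq_neg_of_add_eq_zero_left hsplit
    rw [h, ← Finset.sum_neg_distrib]
    exact Finset.sum_congr rfl fun j _ => by rw [neg_smul]
  have key : ⟪∑ i ∈ Sp, c i • g i, ∑ i ∈ Sp, c i • g i⟫ ≤ 0 := by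
    nth_rewrite 2 [heq]
    rw [inner_sum]
    refine Finset.sum_nonpos fun j hj => ?_
    rw [real_inner_smul_right, sum_inner]
    have hAj : ∑ i ∈ Sp, ⟪c i • g i, g j⟫ ≤ 0 := by
      refine Finset.sum_nonpos fun i hi => ?_
      rw [real_inner_smul_left]
      exact mul_nonpos_of_nonneg_of_nonpos (Finset.mem_filter.1 hi).2.le
        (hpair i (hSpC hi) j (hSmC hj) (hdisj i hi j hj))
    have hcj : 0 ≤ -c j := by linarith [(Finset.mem_filter.1 hj).2]
    exact mul_nonpos_of_nonneg_of_nonpos hcj hAj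
  have hA0 : ∑ i ∈ Sp, c i • g i = 0 :=
    inner_self_eq_zero.1 (le_antisymm key real_inner_self_nonneg)
  by_cases hSpne' : Sp.Nonempty
  · exact no_proper_dep g C hpair hconn c Sp hSpC hSpne' hSpne
      (fun i hi => (Finset.mem_filter.1 hi).2) hA0
  · have hSm0 : ∑ j ∈ Sm, (-c j) • g j = 0 := by rw [← heq]; exact hA0
    have hi₀Sm : i₀.1 ∈ Sm := by
      rw [hSm, Finset.mem_filter]
      refine ⟨i₀.2, ?_⟩
      rcases hci₀.lt_or_gt with h | h
      · exact h
      · exact absurd (Finset.mem_filter.2 ⟨i₀.2, h⟩) (fun hh => hSpne' ⟨i₀.1, hh⟩)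
    exact no_proper_dep g C hpair hconn (fun i => -c i) Sm hSmC ⟨i₀.1, hi₀Sm⟩ hSmne
      (fun i hi => by linarith [(Finset.mem_filter.1 hi).2]) hSm0

lemma component_span (g : ι → E) (C : Finset ι) (lam : ι → ℝ)
    (hlam : ∀ i ∈ C, 0 < lam i) (hdep : ∑ i ∈ C, lam i • g i = 0) {s : ι} (hs : s ∈ C) :
    Submodule.span ℝ (g '' ↑C) = Submodule.span ℝ (g '' ↑(C.erase s)) := by
  classical
  apply le_antisymm
  · rw [Submodule.span_le]
    rintro x ⟨i, hiC, rfl⟩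
    rw [Finset.mem_coe] at hiC
    by_cases his : i = s
    · subst his
      have hsplit : lam i • g i + ∑ j ∈ C.erase i, lam j • g j = 0 := by
        have h := hdep
        rw [← Finset.add_sum_erase C (fun j => lam j • g j) hiC] at h
        exact h
      have hlam0 : lam i ≠ 0 := (hlam i hiC).ne'
      have hgi : g i = (lam i)⁻¹ • (-(∑ j ∈ C.erase i, lam j • g j)) := by
        have : lam i • g i = -(∑ j ∈ C.erase i, lam j • g j) :=
          eq_neg_of_add_eq_zero_left hsplit
        rw [← this, smul_smul, inv_mul_cancel₀ hlam0, one_smul]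
      rw [SetLike.mem_coe, hgi]
      exact Submodule.smul_mem _ _ (Submodule.neg_mem _ (Submodule.sum_mem _ fun j hj =>
        Submodule.smul_mem _ _ (Submodule.subset_span ⟨j, Finset.mem_coe.2 hj, rfl⟩)))
    · exact Submodule.subset_span ⟨i, Finset.mem_coe.2 (Finset.mem_erase.2 ⟨his, hiC⟩), rfl⟩
  · exact Submodule.span_mono (Set.image_mono (Finset.coe_subset.2 (Finset.erase_subset _ _)))

lemma component_simplex (g : ι → E) (bb : ι → ℝ) (C : Finset ι) (lam : ι → ℝ)
    (hpair : ∀ i ∈ C, ∀ j ∈ C, i ≠ j → ⟪g i, g j⟫ ≤ 0)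
    (hconn : ∀ S : Finset ι, S ⊆ C → S.Nonempty → S ≠ C →
      ∃ a ∈ S, ∃ b ∈ C, b ∉ S ∧ ⟪g a, g b⟫ ≠ 0)
    (hlam : ∀ i ∈ C, 0 < lam i)
    (hdep : ∑ i ∈ C, lam i • g i = 0)
    (hβ : 0 < ∑ i ∈ C, lam i * bb i) :
    ∃ v : ι → E,
      (∀ s ∈ C, v s ∈ Submodule.span ℝ (g '' ↑C)) ∧
      (∀ s ∈ C, ∀ i ∈ C, i ≠ s → ⟪g i, v s⟫ = bb i) ∧
      (∀ s ∈ C, ⟪g s, v s⟫ = bb s - (∑ i ∈ C, lam i * bb i) / lam s) ∧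
      {x : E | x ∈ Submodule.span ℝ (g '' ↑C) ∧ ∀ i ∈ C, ⟪g i, x⟫ ≤ bb i}
        = convexHull ℝ (v '' ↑C) ∧
      AffineIndependent ℝ (fun s : ↥C => v s) := by
  classical
  set V := Submodule.span ℝ (g '' ↑C) with hV
  set β := ∑ i ∈ C, lam i * bb i with hβdef
  -- dual vertices
  have hdual : ∀ s ∈ C, ∃ x : E, x ∈ V ∧ ∀ i ∈ C.erase s, ⟪g i, x⟫ = bb i := by
    intro s hs
    have hVe : V = Submodule.span ℝ (g '' ↑(C.erase s)) :=
      component_span g C lam hlam hdep hs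
    have hli := component_indep g C hpair hconn hs
    set T : V →ₗ[ℝ] (↥(C.erase s) → ℝ) :=
      LinearMap.pi (fun i => ((innerSL ℝ (g i.1)).toLinearMap).comp V.subtype) with hT
    have hTapp : ∀ (x : V) (i : ↥(C.erase s)), T x i = ⟪g i.1, x.1⟫ := fun x i => rfl
    have hTinj : Function.Injective T := by
      rw [← LinearMap.ker_eq_bot]
      rw [LinearMap.ker_eq_bot']
      intro x hx
      have hxo : ∀ i ∈ C.erase s, ⟪g i, x.1⟫ = 0 := by
        intro i hi
        have := congrFun hx ⟨i, hi⟩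
        simpa [hTapp] using this
      have hall : ∀ u ∈ Submodule.span ℝ (g '' ↑(C.erase s)), ⟪u, x.1⟫ = 0 := by
        intro u hu
        induction hu using Submodule.span_induction with
        | mem u hm =>
          obtain ⟨i, hi, rfl⟩ := hm
          exact hxo i (Finset.mem_coe.1 hi)
        | zero => exact inner_zero_left _
        | add u v _ _ hu hv => rw [inner_add_left, hu, hv]; ring
        | smul c u _ hu => rw [real_inner_smul_left, hu]; ring
      have : ⟪x.1, x.1⟫ = 0 := hall x.1 (hVe ▸ x.2)
      exact Subtype.ext (inner_self_eq_zero.1 this)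
    have hdim : Module.finrank ℝ V = Module.finrank ℝ (↥(C.erase s) → ℝ) := by
      rw [hVe, Module.finrank_pi, Set.image_eq_range g ↑(C.erase s)]
      exact finrank_span_eq_card hli
    have hTsurj : Function.Surjective T :=
      (LinearMap.injective_iff_surjective_of_finrank_eq_finrank hdim).1 hTinj
    obtain ⟨x, hx⟩ := hTsurj (fun i => bb i.1)
    refine ⟨x.1, x.2, fun i hi => ?_⟩
    have := congrFun hx ⟨i, hi⟩
    simpa [hTapp] using this
  set v : ι → E := fun s => if h : s ∈ C then (hdual s h).choose else 0 with hv
  have hvC : ∀ s ∈ C, v s ∈ V := by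
    intro s hs
    simp only [hv, dif_pos hs]
    exact (hdual s hs).choose_spec.1
  have hvi : ∀ s ∈ C, ∀ i ∈ C, i ≠ s → ⟪g i, v s⟫ = bb i := by
    intro s hs i hi hne
    simp only [hv, dif_pos hs]
    exact (hdual s hs).choose_spec.2 i (Finset.mem_erase.2 ⟨hne, hi⟩)
  have hvs : ∀ s ∈ C, ⟪g s, v s⟫ = bb s - β / lam s := by
    intro s hs
    have h0 : ∑ i ∈ C, lam i * ⟪g i, v s⟫ = 0 := by
      have := congrArg (fun u => ⟪u, v s⟫) hdep
      simpa [sum_inner, real_inner_smul_left] using this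
    rw [← Finset.add_sum_erase C (fun i => lam i * ⟪g i, v s⟫) hs] at h0
    have herase : ∑ i ∈ C.erase s, lam i * ⟪g i, v s⟫ = ∑ i ∈ C.erase s, lam i * bb i :=
      Finset.sum_congr rfl fun i hi => by
        rw [hvi s hs i (Finset.mem_of_mem_erase hi) (Finset.ne_of_mem_erase hi)]
    have hβsplit : lam s * bb s + ∑ i ∈ C.erase s, lam i * bb i = β := by
      rw [hβdef, Finset.add_sum_erase C (fun i => lam i * bb i) hs]
    rw [herase] at h0
    have hlam0 : lam s ≠ 0 := (hlam s hs).ne'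
    field_simp
    linarith [h0, hβsplit]
  -- orthogonality kill
  have hperp : ∀ z : E, z ∈ V → (∀ i ∈ C, ⟪g i, z⟫ = 0) → z = 0 := by
    intro z hzV hzo
    have hall : ∀ u ∈ V, ⟪u, z⟫ = 0 := by
      intro u hu
      induction hu using Submodule.span_induction with
      | mem u hm =>
        obtain ⟨i, hi, rfl⟩ := hm
        exact hzo i (Finset.mem_coe.1 hi)
      | zero => exact inner_zero_left _
      | add u w _ _ hu hw => rw [inner_add_left, hu, hw]; ring
      | smul c u _ hu => rw [real_inner_smul_left, hu]; ring
    exact inner_self_eq_zero.1 (hall z hzV)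
  -- inner product with a weighted sum of the vertices
  have hinner_sum : ∀ (wgt : ι → ℝ), ∀ i ∈ C,
      ⟪g i, ∑ s ∈ C, wgt s • v s⟫ = (∑ s ∈ C, wgt s) * bb i - wgt i * (β / lam i) := by
    intro wgt i hi
    rw [inner_sum]
    have hexp : ∀ s ∈ C, ⟪g i, wgt s • v s⟫ = wgt s * ⟪g i, v s⟫ :=
      fun s _ => real_inner_smul_right _ _ _
    rw [Finset.sum_congr rfl hexp]
    rw [← Finset.add_sum_erase C (fun s => wgt s * ⟪g i, v s⟫) hi]
    have herase : ∑ s ∈ C.erase i, wgt s * ⟪g i, v s⟫ = ∑ s ∈ C.erase i, wgt s * bb i :=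
      Finset.sum_congr rfl fun s hsε => by
        rw [hvi s (Finset.mem_of_mem_erase hsε) i hi
          (Ne.symm (Finset.ne_of_mem_erase hsε))]
    rw [herase, hvs i hi]
    have : ∑ s ∈ C.erase i, wgt s * bb i = (∑ s ∈ C.erase i, wgt s) * bb i :=
      (Finset.sum_mul _ _ _).symm
    rw [this]
    have hsum : ∑ s ∈ C.erase i, wgt s = (∑ s ∈ C, wgt s) - wgt i := by
      rw [← Finset.add_sum_erase C wgt hi]; ring
    rw [hsum]
    ring
  refine ⟨v, hvC, hvi, hvs, ?_, ?_⟩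
  · -- set equality
    apply Set.Subset.antisymm
    · rintro x ⟨hxV, hxle⟩
      set γ : ι → ℝ := fun s => lam s * (bb s - ⟪g s, x⟫) / β with hγ
      have hγ0 : ∀ s ∈ C, 0 ≤ γ s := by
        intro s hs
        have h1 : 0 ≤ bb s - ⟪g s, x⟫ := by linarith [hxle s hs]
        have := hlam s hs
        positivity
      have hγsum : ∑ s ∈ C, γ s = 1 := by
        have hx0 : ∑ s ∈ C, lam s * ⟪g s, x⟫ = 0 := by
          have := congrArg (fun u => ⟪u, x⟫) hdep
          simpa [sum_inner, real_inner_smul_left] using this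
        have : ∑ s ∈ C, γ s = (∑ s ∈ C, lam s * (bb s - ⟪g s, x⟫)) / β := by
          rw [Finset.sum_div]
        rw [this]
        rw [div_eq_one_iff_eq hβ.ne']
        rw [hβdef]
        calc ∑ s ∈ C, lam s * (bb s - ⟪g s, x⟫)
            = ∑ s ∈ C, (lam s * bb s - lam s * ⟪g s, x⟫) :=
              Finset.sum_congr rfl fun s _ => by ring
          _ = ∑ s ∈ C, lam s * bb s - ∑ s ∈ C, lam s * ⟪g s, x⟫ := Finset.sum_sub_distrib _ _
          _ = ∑ s ∈ C, lam s * bb s := by rw [hx0]; ring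
      have hxeq : x = ∑ s ∈ C, γ s • v s := by
        have hz : ∑ s ∈ C, γ s • v s - x = 0 := by
          apply hperp
          · exact Submodule.sub_mem _ (Submodule.sum_mem _ fun s hs =>
              Submodule.smul_mem _ _ (hvC s hs)) hxV
          · intro i hi
            rw [inner_sub_right, hinner_sum γ i hi, hγsum]
            have hγi : γ i * (β / lam i) = bb i - ⟪g i, x⟫ := by
              rw [hγ]
              have h1 : lam i ≠ 0 := (hlam i hi).ne'
              field_simp
            rw [hγi]
            ring
        have := sub_eq_zero.1 hz
        exact this.symm
      rw [hxeq]
      have hcm : C.centerMass γ v = ∑ s ∈ C, γ s • v s :=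
        Finset.centerMass_eq_of_sum_1 C v hγsum
      rw [← hcm]
      exact Finset.centerMass_mem_convexHull C hγ0 (by rw [hγsum]; exact one_pos)
        (fun i hi => Set.mem_image_of_mem v (Finset.mem_coe.2 hi))
    · apply convexHull_min
      · rintro y ⟨s, hs, rfl⟩
        rw [Finset.mem_coe] at hs
        refine ⟨hvC s hs, fun i hi => ?_⟩
        by_cases his : i = s
        · subst his
          rw [hvs i hs]
          have h1 := hlam i hs
          have h2 : 0 < β / lam i := div_pos hβ h1
          linarith
        · rw [hvi s hs i hi his]
      · -- convexity of the slab
        intro x hx y hy a b ha hb hab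
        refine ⟨Submodule.add_mem _ (Submodule.smul_mem _ _ hx.1) (Submodule.smul_mem _ _ hy.1),
          fun i hi => ?_⟩
        rw [inner_add_right, real_inner_smul_right, real_inner_smul_right]
        have h1 := hx.2 i hi
        have h2 := hy.2 i hi
        have h3 : a * bb i + b * bb i = bb i := by rw [← add_mul, hab, one_mul]
        have h4 := mul_le_mul_of_nonneg_left h1 ha
        have h5 := mul_le_mul_of_nonneg_left h2 hb
        linarith
  · -- affine independence
    rw [affineIndependent_iff]
    intro fs wgt hw0 hwv e hefs
    set W : ι → ℝ := fun i => if h : i ∈ C then (if ⟨i, h⟩ ∈ fs then wgt ⟨i, h⟩ else 0) else 0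
      with hW
    have hfs_att : fs ⊆ C.attach := fun z _ => Finset.mem_attach C z
    have hWe : W e.1 = wgt e := by
      simp only [hW]; rw [dif_pos e.2, if_pos hefs]
    have hWsum : ∑ i ∈ C, W i = 0 := by
      rw [← Finset.sum_attach C W]
      have : ∀ i ∈ C.attach, W i.1 = (if i ∈ fs then wgt i else 0) := by
        intro i _
        simp only [hW]; rw [dif_pos i.2]
      rw [Finset.sum_congr rfl this, Finset.sum_ite_mem,
        Finset.inter_eq_right.2 hfs_att]
      exact hw0
    have hWv : ∑ i ∈ C, W i • v i = 0 := by
      rw [← Finset.sum_attach C (fun i => W i • v i)]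
      have : ∀ i ∈ C.attach, W i.1 • v i.1 = (if i ∈ fs then wgt i • v i.1 else 0) := by
        intro i _
        simp only [hW]; rw [dif_pos i.2]
        split <;> simp
      rw [Finset.sum_congr rfl this, Finset.sum_ite_mem,
        Finset.inter_eq_right.2 hfs_att]
      exact hwv
    have h0 : ⟪g e.1, ∑ i ∈ C, W i • v i⟫ = 0 := by rw [hWv, inner_zero_right]
    rw [hinner_sum W e.1 e.2, hWsum] at h0
    have hβl : 0 < β / lam e.1 := div_pos hβ (hlam e.1 e.2)
    have hWe0 : W e.1 = 0 := by
      by_contra hne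
      apply hne
      nlinarith [h0]
    rw [← hWe, hWe0]


end Components

end Helpers

/-- Steinitz-type theorem: a convex polytope `P ⊂ ℝ^n` all of whose dihedral
angles are non-obtuse (outward unit normals of any two facets sharing a point
have nonpositive inner product) is a Cartesian product of simplices, i.e. a
(translated) Minkowski sum of simplices lying in pairwise orthogonal subspaces
spanning `ℝ^n`. -/
theorem acute_polytope_is_product_of_simplices {n m : ℕ}
    (u : Fin m → EuclideanSpace ℝ (Fin n)) (b : Fin m → ℝ)
    (hu : ∀ i, ‖u i‖ = 1)
    (P : Set (EuclideanSpace ℝ (Fin n)))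
    (hP : P = ⋂ i, {x | ⟪u i, x⟫ ≤ b i})
    (hPc : IsCompact P) (hPint : (interior P).Nonempty)
    (hacute : ∀ i j, i ≠ j →
      (P ∩ {x | ⟪u i, x⟫ = b i} ∩ {x | ⟪u j, x⟫ = b j}).Nonempty →
      ⟪u i, u j⟫ ≤ 0) :
    ∃ (k : ℕ) (V : Fin k → Submodule ℝ (EuclideanSpace ℝ (Fin n)))
      (Δ : Fin k → Set (EuclideanSpace ℝ (Fin n)))
      (x₀ : EuclideanSpace ℝ (Fin n)),
      (∀ i j, i ≠ j → ∀ x ∈ V i, ∀ y ∈ V j, ⟪x, y⟫ = 0) ∧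
      (⨆ i, V i) = ⊤ ∧
      (∀ i, Δ i ⊆ (V i : Set (EuclideanSpace ℝ (Fin n)))) ∧
      (∀ i, ∃ (d : ℕ) (pts : Fin (d + 1) → EuclideanSpace ℝ (Fin n)),
        AffineIndependent ℝ pts ∧ (∀ l, pts l ∈ V i) ∧
        Δ i = convexHull ℝ (Set.range pts)) ∧
      P = {x | ∃ y : Fin k → EuclideanSpace ℝ (Fin n),
        (∀ i, y i ∈ Δ i) ∧ x = x₀ + ∑ i, y i} := by
  classical
  have hPne : P.Nonempty := hPint.mono interior_subset
  obtain ⟨x₀, hx₀int⟩ := hPint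
  have hx₀P : x₀ ∈ P := interior_subset hx₀int
  rcases subsingleton_or_nontrivial (EuclideanSpace ℝ (Fin n)) with hsub | hnt
  · -- trivial case
    refine ⟨0, Fin.elim0, Fin.elim0, x₀, fun i => i.elim0, ?_, fun i => i.elim0,
      fun i => i.elim0, ?_⟩
    · apply Submodule.eq_top_iff'.2
      intro x
      rw [Subsingleton.elim x 0]
      exact Submodule.zero_mem _
    · ext x
      simp only [Set.mem_setOf_eq]
      constructor
      · intro _
        exact ⟨Fin.elim0, fun i => i.elim0, Subsingleton.elim _ _⟩
      · rintro ⟨y, -, rfl⟩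
        rw [Subsingleton.elim (x₀ + ∑ i, y i) x₀]
        exact hx₀P
  -- main case
  -- strict feasibility of the interior point
  have hstrict : ∀ i, ⟪u i, x₀⟫ < b i := by
    intro i
    obtain ⟨ε, hε0, hball⟩ := Metric.mem_nhds_iff.1 (mem_interior_iff_mem_nhds.1 hx₀int)
    have hmem : x₀ + (ε / 2) • u i ∈ P := by
      apply hball
      rw [Metric.mem_ball, dist_self_add_left, norm_smul, Real.norm_eq_abs,
        abs_of_pos (by linarith), hu i]
      linarith
    rw [hP] at hmem
    have := mem_iInter.1 hmem i
    rw [mem_setOf_eq, inner_add_right, real_inner_smul_right,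
      real_inner_self_eq_norm_sq, hu i] at this
    nlinarith
  -- the tight index type
  set ι : Type := {i : Fin m // ∃ x ∈ P, ⟪u i, x⟫ = b i} with hι
  set g : ι → EuclideanSpace ℝ (Fin n) := fun i => u i.1 with hg
  have hPI : P = ⋂ i : ι, {x | ⟪g i, x⟫ ≤ b i.1} := reduce_tight u b P hP hPne
  -- all pairs of tight normals have nonpositive inner products
  have hA : ∀ i j : ι, i.1 ≠ j.1 → ⟪g i, g j⟫ ≤ 0 := by
    intro i j hij
    refine opposite_normal u b hu P hP hPc hacute hij ?_ ?_
    · obtain ⟨x, hx1, hx2⟩ := i.2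
      exact ⟨x, hx1, hx2⟩
    · obtain ⟨x, hx1, hx2⟩ := j.2
      exact ⟨x, hx1, hx2⟩
  -- no direction is nonpositive against all tight normals
  have hray : ∀ d : EuclideanSpace ℝ (Fin n), (∀ i : ι, ⟪g i, d⟫ ≤ 0) → d = 0 :=
    fun d hd => bounded_ray g (fun i => b i.1) P hPI hPc.isBounded hPne hd
  have hιne : Nonempty ι := by
    by_contra hempty
    rw [not_nonempty_iff] at hempty
    obtain ⟨z, hz⟩ := exists_ne (0 : EuclideanSpace ℝ (Fin n))
    exact hz (hray z (fun i => (hempty.false i).elim))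
  obtain ⟨lam, hlam, hdep⟩ := pos_dep g hray
  -- connected components of the orthogonality graph
  set rel : ι → ι → Prop := fun i j => ⟪g i, g j⟫ ≠ 0 with hrel
  set st : Setoid ι := ⟨Relation.EqvGen rel, Relation.EqvGen.is_equivalence rel⟩ with hst
  letI : DecidableEq (Quotient st) := Classical.decEq _
  set k : ℕ := Fintype.card (Quotient st) with hk
  set eqv : Quotient st ≃ Fin k := Fintype.equivFin (Quotient st) with heqv
  set cl : ι → Fin k := fun i => eqv (Quotient.mk st i) with hcl
  set C : Fin k → Finset ι := fun t => Finset.univ.filter (fun i => cl i = t) with hC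
  have hCmem : ∀ i : ι, i ∈ C (cl i) := fun i =>
    Finset.mem_filter.2 ⟨Finset.mem_univ i, rfl⟩
  have hCiff : ∀ (t) (i : ι), i ∈ C t ↔ cl i = t := by
    intro t i
    rw [hC, Finset.mem_filter]
    exact ⟨fun h => h.2, fun h => ⟨Finset.mem_univ i, h⟩⟩
  have hsame : ∀ i j : ι, cl i = cl j → Relation.EqvGen rel i j := by
    intro i j h
    have : (Quotient.mk st i) = (Quotient.mk st j) := eqv.injective h
    exact Quotient.exact this
  have hdiff : ∀ i j : ι, cl i ≠ cl j → ⟪g i, g j⟫ = 0 := by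
    intro i j h
    by_contra hne
    exact h (congrArg eqv (Quotient.sound (Relation.EqvGen.rel i j hne)))
  -- basic facts within one component
  have hpairC : ∀ t, ∀ i ∈ C t, ∀ j ∈ C t, i ≠ j → ⟪g i, g j⟫ ≤ 0 := by
    intro t i _ j _ hij
    refine hA i j (fun h => hij (Subtype.ext h))
  have hconnC : ∀ t, ∀ S : Finset ι, S ⊆ C t → S.Nonempty → S ≠ C t →
      ∃ a ∈ S, ∃ c ∈ C t, c ∉ S ∧ ⟪g a, g c⟫ ≠ 0 := by
    intro t S hSC hSne hSneC
    obtain ⟨a₀, ha₀⟩ := hSne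
    have hSsub : ∃ b₀ ∈ C t, b₀ ∉ S := by
      by_contra hno
      push_neg at hno
      exact hSneC (Finset.Subset.antisymm hSC hno)
    obtain ⟨b₀, hb₀C, hb₀S⟩ := hSsub
    have hgen := hsame a₀ b₀ (by rw [(hCiff t a₀).1 (hSC ha₀), (hCiff t b₀).1 hb₀C])
    -- walk along the chain
    have key : ∀ x y : ι, Relation.EqvGen rel x y →
        ((x ∈ S ↔ y ∈ S) ∨ ∃ a ∈ S, ∃ c, c ∉ S ∧ ⟪g a, g c⟫ ≠ 0) := by
      intro x y hxy
      induction hxy with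
      | rel x y hr =>
        by_cases hx : x ∈ S
        · by_cases hy : y ∈ S
          · exact Or.inl (by simp [hx, hy])
          · exact Or.inr ⟨x, hx, y, hy, hr⟩
        · by_cases hy : y ∈ S
          · refine Or.inr ⟨y, hy, x, hx, ?_⟩
            rw [real_inner_comm]
            exact hr
          · exact Or.inl (by simp [hx, hy])
      | refl x => exact Or.inl Iff.rfl
      | symm x y _ ih =>
        rcases ih with h | h
        · exact Or.inl h.symm
        · exact Or.inr h
      | trans x y z _ _ ih1 ih2 =>
        rcases ih1 with h1 | h1
        · rcases ih2 with h2 | h2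
          · exact Or.inl (h1.trans h2)
          · exact Or.inr h2
        · exact Or.inr h1
    rcases key a₀ b₀ hgen with h | h
    · exact absurd (h.1 ha₀) hb₀S
    · obtain ⟨a, haS, c, hcS, hac⟩ := h
      refine ⟨a, haS, c, ?_, hcS, hac⟩
      -- c is in the same component as a
      have : cl a = cl c := by
        by_contra hne
        exact hac (hdiff a c hne)
      rw [hCiff]
      rw [← this, (hCiff t a).1 (hSC haS)]
  -- split the global dependence over components
  have hdept : ∀ t, ∑ i ∈ C t, lam i • g i = 0 := by
    have hsplit : ∑ t, ∑ i ∈ C t, lam i • g i = 0 := by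
      rw [← hdep]
      exact Finset.sum_fiberwise _ _ _
    intro t
    set wv : Fin k → EuclideanSpace ℝ (Fin n) := fun t => ∑ i ∈ C t, lam i • g i with hwv
    have hort : ∀ s t' : Fin k, s ≠ t' → ⟪wv s, wv t'⟫ = 0 := by
      intro s t' hst
      rw [hwv]
      rw [sum_inner]
      refine Finset.sum_eq_zero fun i hi => ?_
      rw [real_inner_smul_left, inner_sum]
      have : ∀ j ∈ C t', ⟪g i, lam j • g j⟫ = 0 := by
        intro j hj
        rw [real_inner_smul_right]
        have : cl i ≠ cl j := by
          rw [(hCiff s i).1 hi, (hCiff t' j).1 hj]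
          exact hst
        rw [hdiff i j this]
        ring
      rw [Finset.sum_congr rfl this, Finset.sum_const, smul_zero]
      ring
    have h0 : ⟪wv t, ∑ s, wv s⟫ = 0 := by
      have : (∑ s, wv s) = 0 := hsplit
      rw [this, inner_zero_right]
    rw [inner_sum, Finset.sum_eq_single t (fun s _ hs => hort t s (Ne.symm hs))
      (fun h => absurd (Finset.mem_univ t) h)] at h0
    exact inner_self_eq_zero.1 h0
  -- each component is nonempty
  have hCne : ∀ t, (C t).Nonempty := by
    intro t
    obtain ⟨q, hq⟩ := Quotient.exists_rep (eqv.symm t)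
    refine ⟨q, (hCiff t q).2 ?_⟩
    show eqv (Quotient.mk st q) = t
    rw [show Quotient.mk st q = eqv.symm t from hq]
    exact eqv.apply_symm_apply t
  -- positivity of the component budgets
  have hβt : ∀ t, 0 < ∑ i ∈ C t, lam i * b i.1 := by
    intro t
    have h0 : ∑ i ∈ C t, lam i * ⟪g i, x₀⟫ = 0 := by
      have h := congrArg (fun z => ⟪z, x₀⟫) (hdept t)
      simp only [sum_inner, real_inner_smul_left, inner_zero_left] at h
      exact h
    have hterm : ∀ i ∈ C t, lam i * ⟪g i, x₀⟫ < lam i * b i.1 :=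
      fun i _ => mul_lt_mul_of_pos_left (hstrict i.1) (hlam i)
    have := Finset.sum_lt_sum_of_nonempty (hCne t) hterm
    linarith
  -- apply the component lemma
  have hcomp := fun t => component_simplex g (fun i => b i.1) (C t) lam
      (hpairC t) (hconnC t) (fun i _ => hlam i) (hdept t) (hβt t)
  choose v hvV hvi hvs hset hAI using hcomp
  set V : Fin k → Submodule ℝ (EuclideanSpace ℝ (Fin n)) :=
    fun t => Submodule.span ℝ (g '' ↑(C t)) with hV
  set Δ : Fin k → Set (EuclideanSpace ℝ (Fin n)) :=
    fun t => {x | x ∈ V t ∧ ∀ i ∈ C t, ⟪g i, x⟫ ≤ b i.1} with hΔ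
  have hgV : ∀ t (i : ι), i ∈ C t → g i ∈ V t := fun t i hi =>
    Submodule.subset_span ⟨i, Finset.mem_coe.2 hi, rfl⟩
  -- orthogonality between distinct components
  have hgen : ∀ (s t : Fin k), s ≠ t → ∀ (i : ι), i ∈ C s →
      ∀ y ∈ V t, ⟪g i, y⟫ = 0 := by
    intro s t hst i hi y hy
    induction hy using Submodule.span_induction with
    | mem z hz =>
      obtain ⟨j, hj, rfl⟩ := hz
      exact hdiff i j (by
        rw [(hCiff s i).1 hi, (hCiff t j).1 (Finset.mem_coe.1 hj)]; exact hst)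
    | zero => exact inner_zero_right _
    | add z w _ _ h1 h2 => rw [inner_add_right, h1, h2]; ring
    | smul c z _ h1 => rw [real_inner_smul_right, h1]; ring
  have hVorth : ∀ s t : Fin k, s ≠ t → ∀ x ∈ V s, ∀ y ∈ V t, ⟪x, y⟫ = 0 := by
    intro s t hst x hx
    induction hx using Submodule.span_induction with
    | mem z hz =>
      obtain ⟨i, hi, rfl⟩ := hz
      exact hgen s t hst i (Finset.mem_coe.1 hi)
    | zero => exact fun y _ => inner_zero_left _
    | add z w _ _ h1 h2 =>
      intro y hy
      rw [inner_add_left, h1 y hy, h2 y hy]; ring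
    | smul c z _ h1 =>
      intro y hy
      rw [real_inner_smul_left, h1 y hy]; ring
  -- the components span everything
  have hsup : (⨆ t, V t) = ⊤ := by
    have hUnion : ⋃ t, (g '' ↑(C t)) = Set.range g := by
      ext z
      constructor
      · rintro ⟨_, ⟨t, rfl⟩, i, _, rfl⟩
        exact ⟨i, rfl⟩
      · rintro ⟨i, rfl⟩
        exact ⟨g '' ↑(C (cl i)), ⟨cl i, rfl⟩, i, Finset.mem_coe.2 (hCmem i), rfl⟩
    have hVspan : (⨆ t, V t) = Submodule.span ℝ (Set.range g) := by
      rw [hV, ← hUnion, Submodule.span_iUnion]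
    rw [hVspan]
    by_contra hne
    have horth : (Submodule.span ℝ (Set.range g))ᗮ ≠ ⊥ :=
      fun h => hne (Submodule.orthogonal_eq_bot_iff.1 h)
    obtain ⟨a, haW, ha0⟩ := Submodule.exists_mem_ne_zero_of_ne_bot horth
    refine ha0 (hray a fun i => le_of_eq ?_)
    exact (Submodule.mem_orthogonal _ a).1 haW (g i)
      (Submodule.subset_span ⟨i, rfl⟩)
  -- decomposition of an arbitrary vector
  have hsum_proj : ∀ x : EuclideanSpace ℝ (Fin n),
      ∑ t, ((Submodule.orthogonalProjection (V t) x : EuclideanSpace ℝ (Fin n))) = x := by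
    intro x
    have hz : x - ∑ t, ((Submodule.orthogonalProjection (V t) x : EuclideanSpace ℝ (Fin n)))
        ∈ (⨆ t, V t)ᗮ := by
      rw [← Submodule.iInf_orthogonal]
      rw [Submodule.mem_iInf]
      intro s
      rw [Submodule.mem_orthogonal]
      intro uu huu
      rw [inner_sub_right, inner_sum]
      rw [Finset.sum_eq_single s
        (fun t _ hts => hVorth s t (Ne.symm hts) uu huu _ (SetLike.coe_mem _))
        (fun h => absurd (Finset.mem_univ s) h)]
      have hps : x - (Submodule.orthogonalProjection (V s) x : EuclideanSpace ℝ (Fin n)) ∈ (V s)ᗮ :=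
        Submodule.sub_starProjection_mem_orthogonal (K := V s) x
      have := (Submodule.mem_orthogonal _ _).1 hps uu huu
      rw [inner_sub_right] at this
      linarith
    rw [hsup, Submodule.top_orthogonal_eq_bot, Submodule.mem_bot] at hz
    have := sub_eq_zero.1 hz
    exact this.symm
  -- projections of points of P lie in the factors
  have hproj_mem : ∀ (t : Fin k), ∀ x ∈ P,
      ((Submodule.orthogonalProjection (V t) x : EuclideanSpace ℝ (Fin n))) ∈ Δ t := by
    intro t x hx
    refine ⟨SetLike.coe_mem _, fun i hi => ?_⟩
    have hps : x - (Submodule.orthogonalProjection (V t) x : EuclideanSpace ℝ (Fin n)) ∈ (V t)ᗮ :=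
      Submodule.sub_starProjection_mem_orthogonal (K := V t) x
    have h1 := (Submodule.mem_orthogonal _ _).1 hps (g i) (hgV t i hi)
    rw [inner_sub_right] at h1
    have h2 : ⟪g i, x⟫ ≤ b i.1 := by
      rw [hP] at hx
      exact mem_iInter.1 hx i.1
    linarith
  -- assemble the answer
  refine ⟨k, V, Δ, 0, hVorth, hsup, fun t x hx => hx.1, ?_, ?_⟩
  · intro t
    have hcard : (C t).card = ((C t).card - 1) + 1 :=
      (Nat.succ_pred_eq_of_pos (Finset.card_pos.2 (hCne t))).symm
    set ee : Fin (((C t).card - 1) + 1) ≃ ↥(C t) :=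
      (finCongr hcard.symm).trans (C t).equivFin.symm with hee
    refine ⟨(C t).card - 1, fun l => v t (ee l).1, ?_, ?_, ?_⟩
    · have := hAI t
      exact (affineIndependent_equiv ee).2 this
    · intro l
      exact hvV t _ (ee l).2
    · have hrange : Set.range (fun l => v t ((ee l) : ι)) = v t '' ↑(C t) := by
        rw [show (fun l => v t ((ee l) : ι)) = (fun s : ↥(C t) => v t s.1) ∘ ee from rfl]
        rw [ee.surjective.range_comp]
        exact (Set.image_eq_range (v t) ↑(C t)).symm
      rw [hrange]
      exact hset t
  · ext x
    simp only [Set.mem_setOf_eq]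
    constructor
    · intro hx
      refine ⟨fun t => ((Submodule.orthogonalProjection (V t) x : EuclideanSpace ℝ (Fin n))),
        fun t => hproj_mem t x hx, ?_⟩
      rw [zero_add, hsum_proj x]
    · rintro ⟨y, hy, rfl⟩
      rw [hPI]
      refine mem_iInter.2 fun i => ?_
      rw [mem_setOf_eq, zero_add, inner_sum]
      rw [Finset.sum_eq_single (cl i)
        (fun t _ hts => hgen (cl i) t (Ne.symm hts) i (hCmem i) _ (hy t).1)
        (fun h => absurd (Finset.mem_univ (cl i)) h)]
      exact (hy (cl i)).2 i (hCmem i)
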